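/- Let p be a prime, n ≥ 2 an integer, and let q₁, …, q_{n−1} be positive integers none of which is divisible by p. Then the equation q₁x₁ + q₂px₂ + ⋯ + q_{n−1}p^{n−2}x_{n−1} − (q₁ + q₂p + ⋯ + q_{n−1}p^{n−2})·p^{n−1}·xₙ = 0 is not n-regular: there exists a coloring C : ℕ⁺ → {1,…,n} with no monochromatic solution in positive integers. -/

import Mathlib

/-- A linear homogeneous equation `∑ aᵢ xᵢ = 0` (coefficients `a : Fin n → ℤ`) is
`r`-regular if every `r`-coloring of the positive integers (modeled as `C : ℕ → Fin r`)
admits a monochromatic solution in positive integers. -/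
def IsRegularEq (n : ℕ) (a : Fin n → ℤ) (r : ℕ) : Prop :=
  ∀ C : ℕ → Fin r, ∃ x : Fin n → ℕ, (∀ i, 0 < x i) ∧
    (∀ i j, C (x i) = C (x j)) ∧ (∑ i, a i * (x i : ℤ)) = 0

lemma aux_fac (p : ℕ) (hp : p.Prime) (c x k : ℕ) (hx : 0 < x) (hc : ¬ p ∣ c) :
    (c * p ^ k * x).factorization p = k + x.factorization p := by
  have hc0 : c ≠ 0 := by rintro rfl; exact hc (dvd_zero p)
  have hpk : p ^ k ≠ 0 := pow_ne_zero _ hp.pos.ne'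
  rw [Nat.factorization_mul (mul_ne_zero hc0 hpk) hx.ne',
    Nat.factorization_mul hc0 hpk, hp.factorization_pow]
  simp [Nat.factorization_eq_zero_of_not_dvd hc, add_comm]

/-- Equation (12) is not `n`-regular: for a prime `p`, `n ≥ 2`, and positive integers
`q₁, …, q_{n−1}` none divisible by `p`, the equation
`q₁x₁ + q₂px₂ + ⋯ + q_{n−1}p^{n−2}x_{n−1} − (q₁ + q₂p + ⋯ + q_{n−1}p^{n−2})p^{n−1}xₙ = 0`
is not `n`-regular. -/
theorem eq12_not_n_regular (p n : ℕ) (hp : p.Prime) (hn : 2 ≤ n)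
    (q : Fin (n - 1) → ℕ) (hq : ∀ i, 0 < q i) (hpq : ∀ i, ¬ p ∣ q i) :
    ¬ IsRegularEq n
      (fun i => if h : (i : ℕ) < n - 1 then (q ⟨i, h⟩ : ℤ) * (p : ℤ) ^ (i : ℕ)
        else -((∑ j, (q j : ℤ) * (p : ℤ) ^ (j : ℕ)) * (p : ℤ) ^ (n - 1)))
      n := by
  intro hreg
  have hn0 : 0 < n := by omega
  have hn1 : 0 < n - 1 := by omega
  -- Q = ∑ q_j p^j
  set Q : ℕ := ∑ j : Fin (n - 1), q j * p ^ (j : ℕ) with hQdef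
  have hQpos : 0 < Q := by
    apply Finset.sum_pos
    · intro j _; exact Nat.mul_pos (hq j) (Nat.pow_pos hp.pos)
    · exact ⟨⟨0, hn1⟩, Finset.mem_univ _⟩
  have hpQ : ¬ p ∣ Q := by
    intro hdvd
    have h0 : (⟨0, hn1⟩ : Fin (n - 1)) ∈ (Finset.univ : Finset (Fin (n - 1))) :=
      Finset.mem_univ _
    rw [hQdef, ← Finset.add_sum_erase _ _ h0] at hdvd
    have hrest : p ∣ ∑ j ∈ Finset.univ.erase (⟨0, hn1⟩ : Fin (n - 1)), q j * p ^ (j : ℕ) := by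
      apply Finset.dvd_sum
      intro j hj
      have hj0 : (j : ℕ) ≠ 0 := by
        intro h
        exact (Finset.mem_erase.1 hj).1 (Fin.ext h)
      exact Dvd.dvd.mul_left (dvd_pow_self p hj0) _
    have : p ∣ q ⟨0, hn1⟩ * p ^ ((⟨0, hn1⟩ : Fin (n - 1)) : ℕ) :=
      (Nat.dvd_add_right hrest).mp (by rwa [add_comm] at hdvd)
    simp only [Fin.val_mk, pow_zero, mul_one] at this
    exact hpq _ this
  -- apply regularity to the coloring by p-adic valuation mod n
  obtain ⟨x, hxpos, hcol, hsum⟩ := hreg (fun m => ⟨m.factorization p % n, Nat.mod_lt _ hn0⟩)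
  have hcol' : ∀ i j, (x i).factorization p % n = (x j).factorization p % n := by
    intro i j
    have := hcol i j
    simpa using congrArg Fin.val this
  -- the natural-number terms and their exact p-adic valuations
  set e : Fin n → ℕ := fun i => (i : ℕ) + (x i).factorization p with hedef
  set t : Fin n → ℕ := fun i =>
    if h : (i : ℕ) < n - 1 then q ⟨i, h⟩ * p ^ (i : ℕ) * x i
    else Q * p ^ (n - 1) * x i with htdef
  have ht0 : ∀ i, t i ≠ 0 := by
    intro i
    by_cases h : (i : ℕ) < n - 1
    · simp only [htdef, dif_pos h]
      exact Nat.mul_ne_zero (Nat.mul_ne_zero (hq _).ne' (pow_ne_zero _ hp.pos.ne')) (hxpos i).ne'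
    · simp only [htdef, dif_neg h]
      exact Nat.mul_ne_zero (Nat.mul_ne_zero hQpos.ne' (pow_ne_zero _ hp.pos.ne')) (hxpos i).ne'
  have hival : ∀ i : Fin n, ¬ (i : ℕ) < n - 1 → (i : ℕ) = n - 1 := by
    intro i h; have := i.isLt; omega
  have hfac : ∀ i, (t i).factorization p = e i := by
    intro i
    by_cases h : (i : ℕ) < n - 1
    · simp only [htdef, dif_pos h]
      exact aux_fac p hp _ _ _ (hxpos i) (hpq _)
    · simp only [htdef, dif_neg h, hedef]
      rw [aux_fac p hp _ _ _ (hxpos i) hpQ, hival i h]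
  have hdvd : ∀ i k, p ^ k ∣ t i ↔ k ≤ e i := by
    intro i k
    rw [hp.pow_dvd_iff_le_factorization (ht0 i), hfac i]
  -- the integer terms
  set a : Fin n → ℤ := fun i => if h : (i : ℕ) < n - 1 then (q ⟨i, h⟩ : ℤ) * (p : ℤ) ^ (i : ℕ)
    else -((∑ j, (q j : ℤ) * (p : ℤ) ^ (j : ℕ)) * (p : ℤ) ^ (n - 1)) with hadef
  set s : Fin n → ℤ := fun i => a i * (x i : ℤ) with hsdef
  have hst : ∀ i, s i = (t i : ℤ) ∨ s i = -(t i : ℤ) := by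
    intro i
    by_cases h : (i : ℕ) < n - 1
    · left; simp only [hsdef, hadef, htdef, dif_pos h]; push_cast; ring
    · right; simp only [hsdef, hadef, htdef, dif_neg h]
      have : (∑ j, (q j : ℤ) * (p : ℤ) ^ (j : ℕ)) = (Q : ℤ) := by
        rw [hQdef]; push_cast; ring
      rw [this]; push_cast; ring
  -- the valuations e are pairwise distinct
  have hedist : ∀ i j : Fin n, i ≠ j → e i ≠ e j := by
    intro i j hij he
    have hmod : (x i).factorization p ≡ (x j).factorization p [MOD n] := hcol' i j
    have h1 : (i : ℕ) + (x j).factorization p ≡ (i : ℕ) + (x i).factorization p [MOD n] :=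
      (Nat.ModEq.add_left _ hmod).symm
    have h2 : (i : ℕ) + (x i).factorization p = (j : ℕ) + (x j).factorization p := he
    have h3 : (i : ℕ) + (x j).factorization p ≡ (j : ℕ) + (x j).factorization p [MOD n] := by
      rw [← h2] at *; exact h1
    have h4 : (i : ℕ) ≡ (j : ℕ) [MOD n] := Nat.ModEq.add_right_cancel' _ h3
    have : (i : ℕ) = (j : ℕ) := by
      have := h4
      unfold Nat.ModEq at this
      rw [Nat.mod_eq_of_lt i.isLt, Nat.mod_eq_of_lt j.isLt] at this
      exact this
    exact hij (Fin.ext this)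
  -- take the term of minimal valuation
  obtain ⟨i₀, -, hmin⟩ := Finset.exists_min_image Finset.univ e ⟨⟨0, hn0⟩, Finset.mem_univ _⟩
  -- all other terms are divisible by p^(e i₀ + 1)
  have hdvd' : ∀ j ∈ Finset.univ.erase i₀, ((p : ℤ)) ^ (e i₀ + 1) ∣ s j := by
    intro j hj
    have hji : j ≠ i₀ := (Finset.mem_erase.1 hj).1
    have hle : e i₀ + 1 ≤ e j := by
      have h1 := hmin j (Finset.mem_univ j)
      have h2 := hedist j i₀ hji
      omega
    have : p ^ (e i₀ + 1) ∣ t j := (hdvd j _).2 hle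
    have hz : ((p : ℤ)) ^ (e i₀ + 1) ∣ (t j : ℤ) := by exact_mod_cast Nat.cast_dvd_cast this
    rcases hst j with h | h <;> rw [h]
    · exact hz
    · exact hz.neg_right
  -- hence p^(e i₀ + 1) divides s i₀, contradiction
  have hsum' : s i₀ = -∑ j ∈ Finset.univ.erase i₀, s j := by
    have := Finset.add_sum_erase Finset.univ s (Finset.mem_univ i₀)
    rw [hsum] at this
    linarith
  have hdvd0 : ((p : ℤ)) ^ (e i₀ + 1) ∣ s i₀ := by
    rw [hsum']
    exact (Finset.dvd_sum hdvd').neg_right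
  have hdvdt : ((p : ℤ)) ^ (e i₀ + 1) ∣ (t i₀ : ℤ) := by
    rcases hst i₀ with h | h
    · rwa [h] at hdvd0
    · rw [h] at hdvd0; exact (dvd_neg.mp hdvd0)
  have : p ^ (e i₀ + 1) ∣ t i₀ := by exact_mod_cast hdvdt
  have := (hdvd i₀ _).1 this
  omega
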